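/- Let m ≥ 2 and let γ, u, k ∈ ℝ. Then G₁ Γ₃ (−Ĥ(k; γ, u)) Γ₃ G₁ = Ĥ(k; γ, u); i.e., the bulk Hamiltonian Ĥ(k;γ,u) satisfies a particle–hole symmetry: it is unitarily conjugate to its negative via the explicit unitary Γ₃ G₁. -/
import Mathlib


open Matrix Complex

/-- Potential at layer `j` (1-indexed, `1 ≤ j ≤ m`): `u_j = (u/(m−1))·(j − (m+1)/2)`. -/
noncomputable def layerPot (m : ℕ) (u : ℝ) (j : ℕ) : ℝ :=
  (u / ((m : ℝ) - 1)) * ((j : ℝ) - ((m : ℝ) + 1) / 2)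

/-- The `2m×2m` bulk Hamiltonian symbol `Ĥ(𝐤; γ, u)`: block-tridiagonal, with `j`-th
diagonal `2×2` block `u_j I₂ + kx σ₁ + ky σ₂`, superdiagonal blocks `γA` and
subdiagonal blocks `γA*`, where `A = [[0,0],[1,0]]`. -/
noncomputable def Hbulk (m : ℕ) (γ u kx ky : ℝ) :
    Matrix (Fin (2 * m)) (Fin (2 * m)) ℂ :=
  Matrix.of fun i j =>
    if (i : ℕ) = (j : ℕ) then ((layerPot m u ((i : ℕ) / 2 + 1) : ℝ) : ℂ)
    else if (i : ℕ) + 1 = (j : ℕ) then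
      (if (i : ℕ) % 2 = 0 then ((kx : ℂ) - (ky : ℂ) * Complex.I) else ((γ : ℝ) : ℂ))
    else if (j : ℕ) + 1 = (i : ℕ) then
      (if (j : ℕ) % 2 = 0 then ((kx : ℂ) + (ky : ℂ) * Complex.I) else ((γ : ℝ) : ℂ))
    else 0
/-- The block-antidiagonal matrix `G₁`: the `2×2` block in block-position
`(b, m−1−b)` (0-indexed blocks) is `σ₁`, all other blocks vanish. -/
def G1mat (m : ℕ) : Matrix (Fin (2 * m)) (Fin (2 * m)) ℂ :=
  Matrix.of fun i j =>
    if (i : ℕ) / 2 + (j : ℕ) / 2 = m - 1 ∧ (i : ℕ) % 2 ≠ (j : ℕ) % 2 then 1 else 0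

/-- `Γ₃ = I_m ⊗ σ₃`: block-diagonal with `σ₃` in every diagonal `2×2` block. -/
def Gamma3mat (m : ℕ) : Matrix (Fin (2 * m)) (Fin (2 * m)) ℂ :=
  Matrix.diagonal fun i => if (i : ℕ) % 2 = 0 then 1 else -1

lemma phi_lt {m : ℕ} (i : Fin (2*m)) : 2*m-1-(i:ℕ) < 2*m := by have := i.isLt; omega

lemma G1_mul_apply {m : ℕ} (M : Matrix (Fin (2*m)) (Fin (2*m)) ℂ) (i j : Fin (2*m)) :
    (G1mat m * M) i j = M ⟨2*m-1-(i:ℕ), phi_lt i⟩ j := by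
  have hi := i.isLt
  rw [Matrix.mul_apply, Finset.sum_eq_single (⟨2*m-1-(i:ℕ), phi_lt i⟩ : Fin (2*m))]
  · have h1 : G1mat m i ⟨2*m-1-(i:ℕ), phi_lt i⟩ = 1 := by
      simp only [G1mat, of_apply, Fin.val_mk]
      rw [if_pos]; omega
    rw [h1, one_mul]
  · intro b _ hb
    have hb' : (b:ℕ) ≠ 2*m-1-(i:ℕ) := fun h => hb (Fin.ext h)
    have hbl := b.isLt
    have h0 : G1mat m i b = 0 := by
      simp only [G1mat, of_apply]
      rw [if_neg]; omega
    rw [h0, zero_mul]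
  · intro h; exact absurd (Finset.mem_univ _) h

lemma mul_G1_apply {m : ℕ} (M : Matrix (Fin (2*m)) (Fin (2*m)) ℂ) (i j : Fin (2*m)) :
    (M * G1mat m) i j = M i ⟨2*m-1-(j:ℕ), phi_lt j⟩ := by
  have hj := j.isLt
  rw [Matrix.mul_apply, Finset.sum_eq_single (⟨2*m-1-(j:ℕ), phi_lt j⟩ : Fin (2*m))]
  · have h1 : G1mat m ⟨2*m-1-(j:ℕ), phi_lt j⟩ j = 1 := by
      simp only [G1mat, of_apply, Fin.val_mk]
      rw [if_pos]; omega
    rw [h1, mul_one]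
  · intro b _ hb
    have hb' : (b:ℕ) ≠ 2*m-1-(j:ℕ) := fun h => hb (Fin.ext h)
    have hbl := b.isLt
    have h0 : G1mat m b j = 0 := by
      simp only [G1mat, of_apply]
      rw [if_neg]; omega
    rw [h0, mul_zero]
  · intro h; exact absurd (Finset.mem_univ _) h

/-- particle–hole symmetry: `G₁ Γ₃ (−Ĥ(k; γ, u)) Γ₃ G₁ = Ĥ(k; γ, u)`. -/
theorem particle_hole_symmetry (m : ℕ) (hm : 2 ≤ m) (γ u k : ℝ) :
    G1mat m * Gamma3mat m * (-(Hbulk m γ u k 0)) * Gamma3mat m * G1mat m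
      = Hbulk m γ u k 0 := by
  ext i j
  have hi := i.isLt
  have hj := j.isLt
  rw [mul_G1_apply, Gamma3mat, Matrix.mul_diagonal, mul_assoc (G1mat m),
      G1_mul_apply, Matrix.diagonal_mul, Matrix.neg_apply]
  simp only [Hbulk, of_apply, Fin.val_mk, layerPot]
  split_ifs <;> first
    | omega
    | (push_cast; ring1)
    | (have hA : (2*m-1-(i:ℕ))/2 + (i:ℕ)/2 + 1 = m := by omega
       have hA' : (((2*m-1-(i:ℕ))/2 : ℕ):ℂ) + (((i:ℕ)/2 : ℕ):ℂ) + 1 = (m:ℂ) := by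
         exact_mod_cast congrArg (Nat.cast : ℕ → ℂ) hA
       push_cast
       linear_combination (-((u:ℂ)/((m:ℂ)-1))) * hA')
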